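/- Suppose q : [0,b] → ℝ≥0 achieves Border's bound with equality at every level set of a virtual value function x, i.e., for all v, ∫_{\{x(t) ≥ v\}} q(t) f(t) dt = (1 − (1 − ∫_{\{x(t) ≥ v\}} f(t) dt)^n)/n, and q satisfies Border's inequality for all measurable sets. Then for any measurable sets C, D of positive f-measure with min_{t∈C} x(t) > max_{t∈D} x(t), the average allocation on C is at least the average allocation on D: (∫_C q f)/(∫_C f) ≥ (∫_D q f)/(∫_D f). -/

import Mathlib

open Set MeasureTheory Filter

private lemma slope_pow (n : ℕ) {u c d : ℝ} (hc : 0 < c) (hd : 0 < d) (hud : 0 ≤ u - d) :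
    (u ^ n - (u - d) ^ n) * c ≤ ((u + c) ^ n - u ^ n) * d := by
  have h := (convexOn_pow (𝕜 := ℝ) n).slope_mono_adjacent
    (x := u - d) (y := u) (z := u + c) (mem_Ici.2 hud) (mem_Ici.2 (by linarith))
    (by linarith) (by linarith)
  rw [show u - (u - d) = d by ring, show u + c - u = c by ring] at h
  exact (div_le_div_iff₀ hd hc).1 h

theorem border_equality_implies_monotone
    (n : ℕ) (hn : 1 ≤ n) (b : ℝ) (hb : 0 < b)
    (f q x : ℝ → ℝ)
    (hf_nonneg : ∀ t ∈ Icc (0:ℝ) b, 0 ≤ f t)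
    (hf_int : IntegrableOn f (Icc 0 b))
    (hf_total : (∫ t in Icc (0:ℝ) b, f t) = 1)
    (hq_nonneg : ∀ t ∈ Icc (0:ℝ) b, 0 ≤ q t)
    (hq_meas : Measurable q) (hx_meas : Measurable x)
    (hborder : ∀ S : Set ℝ, MeasurableSet S → S ⊆ Icc 0 b →
      (∫ t in S, q t * f t) ≤ (1 - (1 - ∫ t in S, f t) ^ n) / n)
    (heq : ∀ v : ℝ,
      (∫ t in {t ∈ Icc (0:ℝ) b | v ≤ x t}, q t * f t) =
        (1 - (1 - ∫ t in {t ∈ Icc (0:ℝ) b | v ≤ x t}, f t) ^ n) / n)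
    (C D : Set ℝ) (hC_meas : MeasurableSet C) (hD_meas : MeasurableSet D)
    (hC_sub : C ⊆ Icc 0 b) (hD_sub : D ⊆ Icc 0 b)
    (hC_pos : 0 < ∫ t in C, f t) (hD_pos : 0 < ∫ t in D, f t)
    (hCD : ∀ t ∈ C, ∀ s ∈ D, x s < x t) :
    (∫ t in D, q t * f t) / (∫ t in D, f t) ≤
      (∫ t in C, q t * f t) / (∫ t in C, f t) := by
  have hn0 : (0:ℝ) < n := by exact_mod_cast Nat.lt_of_lt_of_le Nat.zero_lt_one hn
  have hnne : n ≠ 0 := by omega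
  have hfae : 0 ≤ᵐ[volume.restrict (Icc (0:ℝ) b)] f :=
    ae_restrict_of_forall_mem measurableSet_Icc hf_nonneg
  -- integrability of q*f on any level-type set where Border equality holds with positive mass
  have key_int : ∀ S : Set ℝ, S ⊆ Icc 0 b → (0 < ∫ t in S, f t) →
      ((∫ t in S, q t * f t) = (1 - (1 - ∫ t in S, f t) ^ n) / n) →
      IntegrableOn (fun t => q t * f t) S := by
    intro S hSsub hSpos hSeq
    by_contra h
    rw [integral_undef h] at hSeq
    have hS1 : (∫ t in S, f t) ≤ 1 := by
      rw [← hf_total]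
      exact setIntegral_mono_set hf_int hfae hSsub.eventuallyLE
    have hlt : (1 - ∫ t in S, f t) ^ n < 1 :=
      pow_lt_one₀ (by linarith) (by linarith) hnne
    have : 0 < (1 - (1 - ∫ t in S, f t) ^ n) / n := div_pos (by linarith) hn0
    linarith
  -- construct the separating upper level set W
  obtain ⟨W, hWmeas, hWsub, hCW, hWD, hWeq⟩ :
      ∃ W : Set ℝ, MeasurableSet W ∧ W ⊆ Icc 0 b ∧ C ⊆ W ∧ (∀ s ∈ D, s ∉ W) ∧
        (∫ t in W, q t * f t) = (1 - (1 - ∫ t in W, f t) ^ n) / n := by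
    obtain ⟨t₀, ht₀⟩ : C.Nonempty := by
      rcases C.eq_empty_or_nonempty with h | h
      · rw [h] at hC_pos; simp at hC_pos
      · exact h
    obtain ⟨s₀, hs₀⟩ : D.Nonempty := by
      rcases D.eq_empty_or_nonempty with h | h
      · rw [h] at hD_pos; simp at hD_pos
      · exact h
    set v := sSup (x '' D) with hv
    have hbdd : BddAbove (x '' D) := ⟨x t₀, by rintro _ ⟨s, hs, rfl⟩; exact (hCD t₀ ht₀ s hs).le⟩
    have hDv : ∀ s ∈ D, x s ≤ v := fun s hs => le_csSup hbdd ⟨s, hs, rfl⟩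
    have hCv : ∀ t ∈ C, v ≤ x t := fun t ht =>
      csSup_le ⟨x s₀, s₀, hs₀, rfl⟩ (by rintro _ ⟨s, hs, rfl⟩; exact (hCD t ht s hs).le)
    by_cases hB : ∃ s ∈ D, x s = v
    · -- x attains v on D: use the strict level set, via a limit argument
      obtain ⟨s₁, hs₁, hxs₁⟩ := hB
      have hCv' : ∀ t ∈ C, v < x t := fun t ht => hxs₁ ▸ hCD t ht s₁ hs₁
      refine ⟨{t ∈ Icc (0:ℝ) b | v < x t},
        measurableSet_Icc.inter (hx_meas measurableSet_Ioi),
        fun t ht => ht.1, fun t ht => ⟨hC_sub ht, hCv' t ht⟩,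
        fun s hs hsW => absurd hsW.2 (not_lt.2 (hDv s hs)), ?_⟩
      set W := {t ∈ Icc (0:ℝ) b | v < x t} with hWdef
      set S : ℕ → Set ℝ := fun k => {t ∈ Icc (0:ℝ) b | v + 1 / (k + 1) ≤ x t} with hSdef
      have hSmeas : ∀ k, MeasurableSet (S k) := fun k =>
        measurableSet_Icc.inter (hx_meas measurableSet_Ici)
      have hSmono : Monotone S := by
        intro k m hkm t ht
        refine ⟨ht.1, le_trans (add_le_add_right ?_ v) ht.2⟩
        apply one_div_le_one_div_of_le
        · positivity
        · exact add_le_add_left (Nat.cast_le.2 hkm) 1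
      have hUnion : ⋃ k, S k = W := by
        ext t
        simp only [hSdef, hWdef, mem_iUnion, mem_setOf_eq, Set.mem_sep_iff]
        constructor
        · rintro ⟨k, h1, h2⟩
          refine ⟨h1, lt_of_lt_of_le ?_ h2⟩
          have : (0:ℝ) < 1 / (k + 1) := by positivity
          linarith
        · rintro ⟨h1, h2⟩
          obtain ⟨k, hk⟩ := exists_nat_one_div_lt (sub_pos.2 h2)
          exact ⟨k, h1, by linarith⟩
      have hW0eq := heq v
      have hCW0 : C ⊆ {t ∈ Icc (0:ℝ) b | v ≤ x t} := fun t ht => ⟨hC_sub ht, (hCv' t ht).le⟩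
      have hW0sub : {t ∈ Icc (0:ℝ) b | v ≤ x t} ⊆ Icc 0 b := fun t ht => ht.1
      have hW0pos : 0 < ∫ t in {t ∈ Icc (0:ℝ) b | v ≤ x t}, f t := by
        refine lt_of_lt_of_le hC_pos
          (setIntegral_mono_set (hf_int.mono_set hW0sub) ?_ hCW0.eventuallyLE)
        exact ae_restrict_of_forall_mem
          (measurableSet_Icc.inter (hx_meas measurableSet_Ici))
          (fun t ht => hf_nonneg t ht.1)
      have hWint : IntegrableOn (fun t => q t * f t) W :=
        (key_int _ hW0sub hW0pos hW0eq).mono_set (fun t ht => ⟨ht.1, ht.2.le⟩)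
      have hfint : IntegrableOn f W := hf_int.mono_set (fun t ht => ht.1)
      have h1 := tendsto_setIntegral_of_monotone hSmeas hSmono (hUnion ▸ hfint)
      have h2 := tendsto_setIntegral_of_monotone hSmeas hSmono (hUnion ▸ hWint)
      rw [hUnion] at h1 h2
      have h3 : Tendsto (fun k => (1 - (1 - ∫ t in S k, f t) ^ n) / n) atTop
          (nhds ((1 - (1 - ∫ t in W, f t) ^ n) / n)) :=
        (((h1.const_sub 1).pow n).const_sub 1).div_const _
      have h4 : Tendsto (fun k => ∫ t in S k, q t * f t) atTop
          (nhds ((1 - (1 - ∫ t in W, f t) ^ n) / n)) := by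
        refine h3.congr fun k => ?_
        exact (heq (v + 1 / (k + 1))).symm
      exact tendsto_nhds_unique h2 h4
    · -- v is not attained on D: use the weak level set directly
      push_neg at hB
      refine ⟨{t ∈ Icc (0:ℝ) b | v ≤ x t},
        measurableSet_Icc.inter (hx_meas measurableSet_Ici),
        fun t ht => ht.1, fun t ht => ⟨hC_sub ht, hCv t ht⟩, ?_, heq v⟩
      intro s hs hsW
      exact hB s hs (le_antisymm (hDv s hs) hsW.2)
  -- main argument
  have hfWae : 0 ≤ᵐ[volume.restrict W] f :=
    ae_restrict_of_forall_mem hWmeas (fun t ht => hf_nonneg t (hWsub ht))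
  have hfW : IntegrableOn f W := hf_int.mono_set hWsub
  have hfC : IntegrableOn f C := hf_int.mono_set hC_sub
  have hfD : IntegrableOn f D := hf_int.mono_set hD_sub
  have hWint : IntegrableOn (fun t => q t * f t) W := by
    refine key_int W hWsub (lt_of_lt_of_le hC_pos ?_) hWeq
    exact setIntegral_mono_set hfW hfWae hCW.eventuallyLE
  set c := ∫ t in C, f t with hc
  set d := ∫ t in D, f t with hd
  set w := ∫ t in W, f t with hw
  have hcw : c ≤ w := setIntegral_mono_set hfW hfWae hCW.eventuallyLE
  have hw1 : w ≤ 1 := by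
    rw [← hf_total]; exact setIntegral_mono_set hf_int hfae hWsub.eventuallyLE
  have hDdisj : Disjoint W D := Set.disjoint_left.2 (fun a haW haD => hWD a haD haW)
  have hWDsub : W ∪ D ⊆ Icc 0 b := union_subset hWsub hD_sub
  have hwd_eq : ∫ t in W ∪ D, f t = w + d := setIntegral_union hDdisj hD_meas hfW hfD
  have hwd : w + d ≤ 1 := by
    rw [← hwd_eq, ← hf_total]
    exact setIntegral_mono_set hf_int hfae hWDsub.eventuallyLE
  -- split W into C and W \ C
  have hWCmeas : MeasurableSet (W \ C) := hWmeas.diff hC_meas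
  have hdisjC : Disjoint C (W \ C) := disjoint_sdiff_right
  have hf_split : w = c + ∫ t in W \ C, f t := by
    have h := setIntegral_union hdisjC hWCmeas hfC (hfW.mono_set diff_subset)
    rw [union_diff_cancel hCW] at h
    exact h
  have hq_split : (∫ t in W, q t * f t) =
      (∫ t in C, q t * f t) + ∫ t in W \ C, q t * f t := by
    have h := setIntegral_union hdisjC hWCmeas (hWint.mono_set hCW)
      (hWint.mono_set diff_subset)
    rw [union_diff_cancel hCW] at h
    exact h
  set u := 1 - w with hu
  have hborder_WC := hborder (W \ C) hWCmeas (diff_subset.trans hWsub)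
  have hWCf : (∫ t in W \ C, f t) = w - c := by linarith
  rw [hWCf] at hborder_WC
  have hCq : ((u + c) ^ n - u ^ n) / n ≤ ∫ t in C, q t * f t := by
    have e1 : (1 - (1 - w) ^ n) / n - (1 - (1 - (w - c)) ^ n) / n
        = ((u + c) ^ n - u ^ n) / n := by rw [hu]; ring
    linarith [hq_split, hborder_WC, hWeq]
  by_cases hDint : IntegrableOn (fun t => q t * f t) D
  · have hunion_q : (∫ t in W ∪ D, q t * f t) =
        (∫ t in W, q t * f t) + ∫ t in D, q t * f t :=
      setIntegral_union hDdisj hD_meas hWint hDint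
    have hborder_WD := hborder (W ∪ D) (hWmeas.union hD_meas) hWDsub
    rw [hwd_eq, hunion_q] at hborder_WD
    have hDq : (∫ t in D, q t * f t) ≤ (u ^ n - (u - d) ^ n) / n := by
      have e2 : (1 - (1 - (w + d)) ^ n) / n - (1 - (1 - w) ^ n) / n
          = (u ^ n - (u - d) ^ n) / n := by rw [hu]; ring
      linarith [hWeq]
    rw [div_le_div_iff₀ hD_pos hC_pos]
    have hud : 0 ≤ u - d := by rw [hu]; linarith
    have hslope := slope_pow n hC_pos hD_pos hud
    calc (∫ t in D, q t * f t) * c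
        ≤ ((u ^ n - (u - d) ^ n) / n) * c := mul_le_mul_of_nonneg_right hDq hC_pos.le
      _ = ((u ^ n - (u - d) ^ n) * c) / n := by ring
      _ ≤ (((u + c) ^ n - u ^ n) * d) / n := by gcongr
      _ = (((u + c) ^ n - u ^ n) / n) * d := by ring
      _ ≤ (∫ t in C, q t * f t) * d := mul_le_mul_of_nonneg_right hCq hD_pos.le
  · rw [integral_undef hDint, zero_div]
    exact div_nonneg (setIntegral_nonneg hC_meas (fun t ht =>
      mul_nonneg (hq_nonneg t (hC_sub ht)) (hf_nonneg t (hC_sub ht)))) hC_pos.le
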